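/- Let G be a finite group, F_l a finite field, tr : G → F_l a function, and Z_1, Z_2, ... independent random variables each distributed as tr(X) with X uniform on G. For a finite family of finite subsets I(k) ⊆ ℕ indexed by k ∈ I, set S(I(k)) = Σ_{i ∈ I(k)} Z_i and Φ(I, a) = |{k : S(I(k)) = a}|/|I|. Then Σ_{a ∈ F_l} E[(Φ(I,a) − 1/|F_l|)²] = (1/|I|) · ( (|F_l|−1)/|F_l| + (1/(|I|·|F_l|)) Σ_{ψ ≠ 0} Σ_{k_1 ≠ k_2} E[ψ(Z)]^{|I(k_1)\I(k_2)|} · E[ψ(−Z)]^{|I(k_2)\I(k_1)|} ), where ψ runs over nontrivial additive characters of F_l and Z is distributed as tr(X). -/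

import Mathlib

open Finset

open scoped Classical

section aux
variable {G Fl ι : Type} [Group G] [Fintype G] [Field Fl] [Fintype Fl] [Fintype ι]

private lemma addChar_map_sum (ψ : AddChar Fl ℂ) (s : Finset ι) (f : ι → Fl) :
    ψ (∑ i ∈ s, f i) = ∏ i ∈ s, ψ (f i) := by
  induction s using Finset.cons_induction with
  | empty => simp
  | cons a s ha ih =>
      rw [Finset.sum_cons, Finset.prod_cons, AddChar.map_add_eq_mul, ih]

private lemma factor (tr : G → Fl) (ψ : AddChar Fl ℂ) (A B : Finset ι) (hAB : Disjoint A B) :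
    (1 / (Fintype.card (ι → G) : ℂ)) *
        ∑ ω : ι → G, ψ ((∑ i ∈ A, tr (ω i)) - ∑ i ∈ B, tr (ω i)) =
      ((1 / (Fintype.card G : ℂ)) * ∑ v : G, ψ (tr v)) ^ A.card *
        ((1 / (Fintype.card G : ℂ)) * ∑ v : G, ψ (-tr v)) ^ B.card := by
  set g : ι → G → ℂ := fun i v => if i ∈ A then ψ (tr v) else if i ∈ B then ψ (-tr v) else 1
    with hg
  have hsplit : ∀ h : ι → ℂ, (∏ i : ι, h i) =
      (∏ i ∈ A, h i) * (∏ i ∈ B, h i) * ∏ i ∈ (A ∪ B)ᶜ, h i := by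
    intro h
    rw [← Finset.prod_union hAB, Finset.prod_mul_prod_compl]
  have hgprod : ∀ h : ι → G, (∏ i : ι, g i (h i)) =
      (∏ i ∈ A, ψ (tr (h i))) * ∏ i ∈ B, ψ (-tr (h i)) := by
    intro h
    rw [hsplit fun i => g i (h i)]
    have h1 : ∀ i ∈ A, g i (h i) = ψ (tr (h i)) := fun i hi => by simp [hg, hi]
    have h2 : ∀ i ∈ B, g i (h i) = ψ (-tr (h i)) := fun i hi => by
      have : i ∉ A := fun hiA => (Finset.disjoint_left.1 hAB hiA) hi
      simp [hg, hi, this]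
    have h3 : ∀ i ∈ (A ∪ B)ᶜ, g i (h i) = 1 := fun i hi => by
      rw [Finset.mem_compl, Finset.mem_union] at hi
      push_neg at hi
      simp [hg, hi.1, hi.2]
    rw [Finset.prod_congr rfl h1, Finset.prod_congr rfl h2, Finset.prod_congr rfl h3,
      Finset.prod_const_one, mul_one]
  have hω : ∀ ω : ι → G, ψ ((∑ i ∈ A, tr (ω i)) - ∑ i ∈ B, tr (ω i)) = ∏ i : ι, g i (ω i) := by
    intro ω
    rw [hgprod, sub_eq_add_neg, ← Finset.sum_neg_distrib, AddChar.map_add_eq_mul,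
      addChar_map_sum, addChar_map_sum]
  rw [Finset.sum_congr rfl fun ω _ => hω ω]
  rw [← Fintype.prod_sum g]
  rw [hsplit fun i => ∑ v : G, g i v]
  have e1 : ∀ i ∈ A, (∑ v : G, g i v) = ∑ v : G, ψ (tr v) := fun i hi =>
    Finset.sum_congr rfl fun v _ => by simp [hg, hi]
  have e2 : ∀ i ∈ B, (∑ v : G, g i v) = ∑ v : G, ψ (-tr v) := fun i hi => by
    have : i ∉ A := fun hiA => (Finset.disjoint_left.1 hAB hiA) hi
    exact Finset.sum_congr rfl fun v _ => by simp [hg, hi, this]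
  have e3 : ∀ i ∈ (A ∪ B)ᶜ, (∑ v : G, g i v) = (Fintype.card G : ℂ) := fun i hi => by
    rw [Finset.mem_compl, Finset.mem_union] at hi
    push_neg at hi
    simp [hg, hi.1, hi.2, Finset.card_univ]
  rw [Finset.prod_congr rfl e1, Finset.prod_congr rfl e2, Finset.prod_congr rfl e3,
    Finset.prod_const, Finset.prod_const, Finset.prod_const]
  have hm : (Fintype.card G : ℂ) ≠ 0 := Nat.cast_ne_zero.2 Fintype.card_ne_zero
  have hcard : Fintype.card ι = A.card + B.card + (A ∪ B)ᶜ.card := by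
    rw [Finset.card_compl, Finset.card_union_of_disjoint hAB]
    have hle : A.card + B.card ≤ Fintype.card ι := by
      rw [← Finset.card_union_of_disjoint hAB]
      exact (Finset.card_le_card (Finset.subset_univ _)).trans_eq (Finset.card_univ)
    omega
  have hN : (Fintype.card (ι → G) : ℂ) =
      (Fintype.card G : ℂ) ^ A.card * (Fintype.card G : ℂ) ^ B.card *
        (Fintype.card G : ℂ) ^ (A ∪ B)ᶜ.card := by
    rw [Fintype.card_fun, hcard]
    push_cast
    ring
  rw [hN]
  rw [mul_pow, mul_pow, div_pow, div_pow, one_pow, one_pow]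
  field_simp
end aux

open scoped Classical in
theorem stmt13 {G Fl ι κ : Type} [Group G] [Fintype G] [Field Fl] [Fintype Fl]
    [Fintype ι] [Fintype κ] [Nonempty κ]
    (tr : G → Fl) (I : κ → Finset ι) :
    (∑ a : Fl, (1 / (Fintype.card (ι → G) : ℂ)) * ∑ ω : ι → G,
        (((Finset.univ.filter fun k : κ => (∑ i ∈ I k, tr (ω i)) = a).card : ℂ) /
            (Fintype.card κ : ℂ) - 1 / (Fintype.card Fl : ℂ)) ^ 2) =
      (1 / (Fintype.card κ : ℂ)) *
        (((Fintype.card Fl : ℂ) - 1) / (Fintype.card Fl : ℂ) +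
          (1 / ((Fintype.card κ : ℂ) * (Fintype.card Fl : ℂ))) *
            ∑ ψ ∈ Finset.univ.filter (fun ψ : AddChar Fl ℂ => ψ ≠ 0),
              ∑ kk ∈ Finset.univ.filter (fun kk : κ × κ => kk.1 ≠ kk.2),
                ((1 / (Fintype.card G : ℂ)) * ∑ v : G, ψ (tr v)) ^ (I kk.1 \ I kk.2).card *
                  ((1 / (Fintype.card G : ℂ)) * ∑ v : G, ψ (-tr v)) ^
                    (I kk.2 \ I kk.1).card) := by
  have hq : (Fintype.card Fl : ℂ) ≠ 0 := Nat.cast_ne_zero.2 Fintype.card_ne_zero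
  have hn : (Fintype.card κ : ℂ) ≠ 0 := Nat.cast_ne_zero.2 Fintype.card_ne_zero
  have hN : (Fintype.card (ι → G) : ℂ) ≠ 0 := Nat.cast_ne_zero.2 Fintype.card_ne_zero
  set q : ℂ := (Fintype.card Fl : ℂ) with hqdef
  set n : ℂ := (Fintype.card κ : ℂ) with hndef
  set N : ℂ := (Fintype.card (ι → G) : ℂ) with hNdef
  set F : Finset (AddChar Fl ℂ) := Finset.univ.filter (fun ψ : AddChar Fl ℂ => ψ ≠ 0) with hF
  set S : κ → (ι → G) → Fl := fun k ω => ∑ i ∈ I k, tr (ω i) with hS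
  -- Step 1: character expansion of the centered indicator
  have key1 : ∀ (x a : Fl),
      (∑ ψ ∈ F, ψ (x - a)) = q * (if x = a then 1 else 0) - 1 := by
    intro x a
    have h0 : (∑ ψ : AddChar Fl ℂ, ψ (x - a)) = q * (if x = a then 1 else 0) := by
      rw [AddChar.sum_apply_eq_ite]
      by_cases h : x = a <;> simp [h, sub_eq_zero, hqdef]
    have hsplit := Finset.sum_filter_add_sum_filter_not (Finset.univ : Finset (AddChar Fl ℂ))
      (fun ψ => ψ = 0) (fun ψ => ψ (x - a))
    have hzero : (∑ ψ ∈ Finset.univ.filter (fun ψ : AddChar Fl ℂ => ψ = 0), ψ (x - a)) = 1 := by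
      rw [Finset.filter_eq']
      simp
    have hFeq : Finset.univ.filter (fun ψ : AddChar Fl ℂ => ¬ ψ = 0) = F := rfl
    rw [hFeq, hzero, h0] at hsplit
    linear_combination hsplit
  -- Step 2: centered empirical frequency via nontrivial characters
  have key2 : ∀ (ω : ι → G) (a : Fl),
      ((Finset.univ.filter fun k : κ => S k ω = a).card : ℂ) / n - 1 / q
        = 1 / (n * q) * ∑ ψ ∈ F, ∑ k : κ, ψ (S k ω - a) := by
    intro ω a
    rw [Finset.sum_comm]
    have h1 : ∀ k : κ, (∑ ψ ∈ F, ψ (S k ω - a)) = q * (if S k ω = a then 1 else 0) - 1 :=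
      fun k => key1 _ _
    rw [Finset.sum_congr rfl fun k _ => h1 k, Finset.sum_sub_distrib, ← Finset.mul_sum,
      Finset.sum_const, Finset.card_univ]
    have hcard : ((Finset.univ.filter fun k : κ => S k ω = a).card : ℂ)
        = ∑ k : κ, if S k ω = a then (1 : ℂ) else 0 := by
      rw [Finset.card_filter]
      push_cast
      exact Finset.sum_congr rfl fun k _ => by split_ifs <;> simp
    rw [hcard]
    field_simp
    ring
  -- the inner evaluation over a and ψ2
  have hin : ∀ (ψ1 ψ2 : AddChar Fl ℂ) (x1 x2 : Fl),
      (∑ a : Fl, ψ1 (x1 - a) * ψ2 (x2 - a))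
        = ψ1 x1 * ψ2 x2 * (if ψ1 + ψ2 = 0 then q else 0) := by
    intro ψ1 ψ2 x1 x2
    have h1 : ∀ a : Fl, ψ1 (x1 - a) * ψ2 (x2 - a) = ψ1 x1 * ψ2 x2 * (ψ1 + ψ2) (-a) := by
      intro a
      rw [sub_eq_add_neg, sub_eq_add_neg, AddChar.map_add_eq_mul, AddChar.map_add_eq_mul,
        AddChar.add_apply]
      ring
    rw [Finset.sum_congr rfl fun a _ => h1 a, ← Finset.mul_sum]
    congr 1
    rw [← AddChar.sum_eq_ite (ψ1 + ψ2)]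
    exact Fintype.sum_equiv (Equiv.neg Fl) _ _ fun a => rfl
  -- evaluate the ψ2 sum by orthogonality
  have inner : ∀ (ψ1 : AddChar Fl ℂ), ψ1 ∈ F → ∀ x1 x2 : Fl,
      (∑ ψ2 ∈ F, ψ1 x1 * ψ2 x2 * (if ψ1 + ψ2 = 0 then q else 0)) = q * ψ1 (x1 - x2) := by
    intro ψ1 h1 x1 x2
    rw [hF, Finset.mem_filter] at h1
    rw [Finset.sum_eq_single_of_mem (-ψ1) (by simp [hF, neg_ne_zero, h1.2])]
    · rw [if_pos (add_neg_cancel ψ1), AddChar.neg_apply, ← AddChar.map_add_eq_mul,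
        ← sub_eq_add_neg]
      ring
    · intro ψ2 _ hne
      have : ψ1 + ψ2 ≠ 0 := fun h => hne (by rw [eq_neg_of_add_eq_zero_right h])
      simp [this]
  -- Step 3: sum over a of the squared centered frequency
  have key3 : ∀ ω : ι → G,
      (∑ a : Fl, (((Finset.univ.filter fun k : κ => S k ω = a).card : ℂ) / n - 1 / q) ^ 2)
        = 1 / (n ^ 2 * q) * ∑ ψ ∈ F, ∑ kk : κ × κ, ψ (S kk.1 ω - S kk.2 ω) := by
    intro ω
    have hT : ∀ a : Fl, (∑ ψ ∈ F, ∑ k : κ, ψ (S k ω - a))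
        = ∑ p ∈ F ×ˢ (Finset.univ : Finset κ), p.1 (S p.2 ω - a) :=
      fun a => (Finset.sum_product F (Finset.univ : Finset κ)
        (fun p => p.1 (S p.2 ω - a))).symm
    calc (∑ a : Fl, (((Finset.univ.filter fun k : κ => S k ω = a).card : ℂ) / n - 1 / q) ^ 2)
        = ∑ a : Fl, (1 / (n * q)) ^ 2 * ∑ p ∈ F ×ˢ (Finset.univ : Finset κ),
            ∑ r ∈ F ×ˢ (Finset.univ : Finset κ),
              p.1 (S p.2 ω - a) * r.1 (S r.2 ω - a) := by
          refine Finset.sum_congr rfl fun a _ => ?_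
          rw [key2 ω a, hT, mul_pow,
            pow_two (∑ p ∈ F ×ˢ (Finset.univ : Finset κ), p.1 (S p.2 ω - a)),
            Finset.sum_mul_sum]
      _ = (1 / (n * q)) ^ 2 * ∑ p ∈ F ×ˢ (Finset.univ : Finset κ),
            ∑ r ∈ F ×ˢ (Finset.univ : Finset κ), ∑ a : Fl,
              p.1 (S p.2 ω - a) * r.1 (S r.2 ω - a) := by
          rw [← Finset.mul_sum]
          congr 1
          rw [Finset.sum_comm]
          exact Finset.sum_congr rfl fun p _ => Finset.sum_comm
      _ = (1 / (n * q)) ^ 2 * ∑ p ∈ F ×ˢ (Finset.univ : Finset κ),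
            ∑ k2 : κ, q * p.1 (S p.2 ω - S k2 ω) := by
          congr 1
          refine Finset.sum_congr rfl fun p hp => ?_
          have hp1 : p.1 ∈ F := (Finset.mem_product.1 hp).1
          rw [Finset.sum_congr rfl fun r (_ : r ∈ F ×ˢ (Finset.univ : Finset κ)) =>
            hin p.1 r.1 (S p.2 ω) (S r.2 ω)]
          rw [Finset.sum_product, Finset.sum_comm]
          refine Finset.sum_congr rfl fun k2 _ => ?_
          exact inner p.1 hp1 (S p.2 ω) (S k2 ω)
      _ = 1 / (n ^ 2 * q) * ∑ ψ ∈ F, ∑ kk : κ × κ, ψ (S kk.1 ω - S kk.2 ω) := by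
          rw [Finset.sum_product]
          simp_rw [← Finset.mul_sum, Fintype.sum_prod_type]
          field_simp
  -- average over ω of a single character term
  have hdiff : ∀ (k1 k2 : κ) (ω : ι → G),
      S k1 ω - S k2 ω = (∑ i ∈ I k1 \ I k2, tr (ω i)) - ∑ i ∈ I k2 \ I k1, tr (ω i) := by
    intro k1 k2 ω
    have h1 : (∑ i ∈ I k1, tr (ω i))
        = (∑ i ∈ I k1 \ I k2, tr (ω i)) + ∑ i ∈ I k1 ∩ I k2, tr (ω i) := by
      rw [← Finset.sum_union (Finset.disjoint_sdiff_inter _ _), Finset.sdiff_union_inter]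
    have h2 : (∑ i ∈ I k2, tr (ω i))
        = (∑ i ∈ I k2 \ I k1, tr (ω i)) + ∑ i ∈ I k1 ∩ I k2, tr (ω i) := by
      rw [Finset.inter_comm,
        ← Finset.sum_union (Finset.disjoint_sdiff_inter _ _), Finset.sdiff_union_inter]
    simp only [hS]
    rw [h1, h2]
    ring
  have hW : ∀ (ψ : AddChar Fl ℂ) (kk : κ × κ),
      (1 / N) * ∑ ω : ι → G, ψ (S kk.1 ω - S kk.2 ω)
        = ((1 / (Fintype.card G : ℂ)) * ∑ v : G, ψ (tr v)) ^ (I kk.1 \ I kk.2).card *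
            ((1 / (Fintype.card G : ℂ)) * ∑ v : G, ψ (-tr v)) ^ (I kk.2 \ I kk.1).card := by
    intro ψ kk
    rw [Finset.sum_congr rfl fun ω _ => by rw [hdiff kk.1 kk.2 ω]]
    exact factor tr ψ _ _ (disjoint_sdiff_sdiff)
  have hWdiag : ∀ (ψ : AddChar Fl ℂ) (kk : κ × κ), kk.1 = kk.2 →
      (1 / N) * ∑ ω : ι → G, ψ (S kk.1 ω - S kk.2 ω) = 1 := by
    intro ψ kk h
    rw [Finset.sum_congr rfl fun ω _ => by rw [h, sub_self, AddChar.map_zero_eq_one]]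
    rw [Finset.sum_const, Finset.card_univ, nsmul_eq_mul, mul_one, hNdef]
    field_simp
  -- cardinality facts
  have hdiagcard : (Finset.univ.filter fun kk : κ × κ => kk.1 = kk.2).card = Fintype.card κ := by
    have himg : (Finset.univ.filter fun kk : κ × κ => kk.1 = kk.2)
        = Finset.univ.image (fun k : κ => (k, k)) := by
      ext kk
      simp only [Finset.mem_filter, Finset.mem_univ, true_and, Finset.mem_image]
      constructor
      · intro h; exact ⟨kk.1, by rw [Prod.ext_iff]; exact ⟨rfl, h⟩⟩
      · rintro ⟨k, rfl⟩; rfl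
    rw [himg, Finset.card_image_of_injective _ (fun a b h => (Prod.ext_iff.1 h).1),
      Finset.card_univ]
  have hFcard : (F.card : ℂ) = q - 1 := by
    have h1 : F = Finset.univ.erase (0 : AddChar Fl ℂ) := by
      rw [hF, Finset.filter_ne']
    rw [h1, Finset.card_erase_of_mem (Finset.mem_univ _), Finset.card_univ, AddChar.card_eq,
      hqdef]
    have h2 : 1 ≤ Fintype.card Fl := Fintype.card_pos
    push_cast [h2]
    ring
  -- assemble everything
  calc (∑ a : Fl, (1 / N) * ∑ ω : ι → G,
        (((Finset.univ.filter fun k : κ => S k ω = a).card : ℂ) / n - 1 / q) ^ 2)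
      = (1 / N) * ∑ ω : ι → G, ∑ a : Fl,
          (((Finset.univ.filter fun k : κ => S k ω = a).card : ℂ) / n - 1 / q) ^ 2 := by
        rw [← Finset.mul_sum, Finset.sum_comm]
    _ = (1 / N) * ∑ ω : ι → G,
          1 / (n ^ 2 * q) * ∑ ψ ∈ F, ∑ kk : κ × κ, ψ (S kk.1 ω - S kk.2 ω) := by
        rw [Finset.sum_congr rfl fun ω _ => key3 ω]
    _ = 1 / (n ^ 2 * q) * ∑ ψ ∈ F, ∑ kk : κ × κ,
          (1 / N) * ∑ ω : ι → G, ψ (S kk.1 ω - S kk.2 ω) := by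
        rw [← Finset.mul_sum, ← mul_assoc, mul_comm (1 / N) (1 / (n ^ 2 * q)), mul_assoc]
        congr 1
        rw [Finset.sum_comm, Finset.mul_sum]
        refine Finset.sum_congr rfl fun ψ _ => ?_
        rw [Finset.sum_comm, Finset.mul_sum]
    _ = 1 / (n ^ 2 * q) * ∑ ψ ∈ F,
          (n + ∑ kk ∈ Finset.univ.filter (fun kk : κ × κ => kk.1 ≠ kk.2),
            ((1 / (Fintype.card G : ℂ)) * ∑ v : G, ψ (tr v)) ^ (I kk.1 \ I kk.2).card *
              ((1 / (Fintype.card G : ℂ)) * ∑ v : G, ψ (-tr v)) ^ (I kk.2 \ I kk.1).card) := by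
        refine congrArg _ (Finset.sum_congr rfl fun ψ _ => ?_)
        rw [← Finset.sum_filter_add_sum_filter_not (Finset.univ : Finset (κ × κ))
          (fun kk => kk.1 = kk.2)
          (fun kk => (1 / N) * ∑ ω : ι → G, ψ (S kk.1 ω - S kk.2 ω))]
        congr 1
        · rw [Finset.sum_congr rfl fun kk hkk => hWdiag ψ kk (Finset.mem_filter.1 hkk).2,
            Finset.sum_const, nsmul_eq_mul, mul_one, hdiagcard, hndef]
        · exact Finset.sum_congr rfl fun kk _ => hW ψ kk
    _ = (1 / n) * ((q - 1) / q + 1 / (n * q) *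
          ∑ ψ ∈ F, ∑ kk ∈ Finset.univ.filter (fun kk : κ × κ => kk.1 ≠ kk.2),
            ((1 / (Fintype.card G : ℂ)) * ∑ v : G, ψ (tr v)) ^ (I kk.1 \ I kk.2).card *
              ((1 / (Fintype.card G : ℂ)) * ∑ v : G, ψ (-tr v)) ^ (I kk.2 \ I kk.1).card) := by
        rw [Finset.sum_add_distrib, Finset.sum_const, nsmul_eq_mul, hFcard]
        field_simp
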